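/- Fix m, ρ > 0 and n ≥ 2, and for R ∈ (0, R̄_m) with R̄_m := (m/(ρω_n))^{1/n} define ū(R) := (m − ρω_nRⁿ)/(nω_nR^{n−1}) and e(R) := nω_nR^{n−1}·ψ(ū(R)), where ω_n is the volume of the unit ball and ψ : [0,∞) → (0,∞) is C¹ and convex. If ψ is superlinear at infinity (ψ(s)/s → ∞ as s → ∞) and ψ'(0) < (n−1)(ω_n/m)^{1/n} ρ^{(1−n)/n} ψ(0), then e attains a minimum at some R ∈ (0, R̄_m): e(R) → ∞ as R → 0⁺, and e'(R̄_m) > 0. -/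

import Mathlib

open MeasureTheory Filter

theorem stmt13 (n : ℕ) (hn : 2 ≤ n) (ρ m ωn Rm : ℝ) (hρ : 0 < ρ) (hm : 0 < m)
    (hω : ωn = (volume (Metric.ball (0 : EuclideanSpace ℝ (Fin n)) 1)).toReal)
    (hRm : Rm = (m / (ρ * ωn)) ^ ((1:ℝ) / n))
    (ψ : ℝ → ℝ) (hC1 : ContDiff ℝ 1 ψ) (hconv : ConvexOn ℝ (Set.Ici (0:ℝ)) ψ)
    (hpos : ∀ s : ℝ, 0 ≤ s → 0 < ψ s)
    (hsuper : Tendsto (fun s => ψ s / s) atTop atTop)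
    (hA1 : deriv ψ 0 < ((n:ℝ) - 1) * (ωn / m) ^ ((1:ℝ) / n) * ρ ^ ((1 - (n:ℝ)) / n) * ψ 0)
    (ubar e : ℝ → ℝ)
    (hubar : ∀ R : ℝ, ubar R = (m - ρ * ωn * R ^ n) / ((n:ℝ) * ωn * R ^ (n - 1)))
    (he : ∀ R : ℝ, e R = (n:ℝ) * ωn * R ^ (n - 1) * ψ (ubar R)) :
    (∃ R ∈ Set.Ioo (0:ℝ) Rm, ∀ R' ∈ Set.Ioo (0:ℝ) Rm, e R ≤ e R') ∧
    Tendsto e (nhdsWithin 0 (Set.Ioi 0)) atTop ∧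
    0 < deriv e Rm := by
  have hubar' : ubar = fun R => (m - ρ * ωn * R ^ n) / ((n:ℝ) * ωn * R ^ (n - 1)) :=
    funext hubar
  have he' : e = fun R => (n:ℝ) * ωn * R ^ (n - 1) * ψ (ubar R) := funext he
  subst he' hubar'
  clear hconv
  -- basic positivity
  have hωpos : 0 < ωn := by
    rw [hω]
    exact ENNReal.toReal_pos (Metric.measure_ball_pos volume 0 one_pos).ne' measure_ball_lt_top.ne
  clear hω
  have hn0 : (0:ℝ) < n := by positivity
  have hn0' : (n:ℝ) ≠ 0 := hn0.ne'
  have hn1 : (1:ℝ) ≤ (n:ℝ) := by exact_mod_cast le_trans (by norm_num) hn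
  have hn2 : (2:ℝ) ≤ (n:ℝ) := by exact_mod_cast hn
  have hmρω : 0 < m / (ρ * ωn) := by positivity
  have hRmpos : 0 < Rm := by rw [hRm]; positivity
  have hRmn : Rm ^ n = m / (ρ * ωn) := by
    rw [hRm, ← Real.rpow_natCast (((m / (ρ * ωn)) ^ ((1:ℝ)/n))) n, ← Real.rpow_mul hmρω.le,
      one_div_mul_cancel hn0', Real.rpow_one]
  have hmass : ρ * ωn * Rm ^ n = m := by
    rw [hRmn]; field_simp
  -- nat subtraction facts
  have hsub1 : n - 1 - 1 = n - 2 := by omega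
  have hsub2 : (n - 1 : ℕ) = (n - 2) + 1 := by omega
  have hcast1 : ((n - 1 : ℕ) : ℝ) = (n:ℝ) - 1 := by
    have : 1 ≤ n := by omega
    push_cast [this]; ring
  -- ubar Rm = 0
  have hubarRm : (m - ρ * ωn * Rm ^ n) / ((n:ℝ) * ωn * Rm ^ (n - 1)) = 0 := by
    rw [hmass]; simp
  -- derivative of ubar at Rm
  have hden_ne : (n:ℝ) * ωn * Rm ^ (n - 1) ≠ 0 := by positivity
  have hnum : HasDerivAt (fun R : ℝ => m - ρ * ωn * R ^ n)
      (-(ρ * ωn * ((n:ℝ) * Rm ^ (n - 1)))) Rm := by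
    simpa using ((hasDerivAt_pow n Rm).const_mul (ρ * ωn)).const_sub m
  have hden : HasDerivAt (fun R : ℝ => (n:ℝ) * ωn * R ^ (n - 1))
      ((n:ℝ) * ωn * (((n:ℝ) - 1) * Rm ^ (n - 2))) Rm := by
    have := (hasDerivAt_pow (n - 1) Rm).const_mul ((n:ℝ) * ωn)
    rw [hsub1, hcast1] at this
    exact this
  have hud : HasDerivAt (fun R : ℝ => (m - ρ * ωn * R ^ n) / ((n:ℝ) * ωn * R ^ (n - 1)))
      (-ρ) Rm := by
    have h := hnum.div hden hden_ne
    refine h.congr_deriv ?_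
    rw [hmass]
    field_simp
    ring
  -- derivative of e at Rm
  have hψd : HasDerivAt ψ (deriv ψ 0)
      ((m - ρ * ωn * Rm ^ n) / ((n:ℝ) * ωn * Rm ^ (n - 1))) := by
    rw [hubarRm]
    exact ((hC1.differentiable one_ne_zero) 0).hasDerivAt
  have hcomp := hψd.comp Rm hud
  have hE : HasDerivAt (fun R : ℝ =>
      (n:ℝ) * ωn * R ^ (n - 1) * ψ ((m - ρ * ωn * R ^ n) / ((n:ℝ) * ωn * R ^ (n - 1))))
      ((n:ℝ) * ωn * (((n:ℝ) - 1) * Rm ^ (n - 2)) *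
        ψ ((m - ρ * ωn * Rm ^ n) / ((n:ℝ) * ωn * Rm ^ (n - 1))) +
        (n:ℝ) * ωn * Rm ^ (n - 1) * (deriv ψ 0 * -ρ)) Rm := hden.mul hcomp
  -- positivity of the derivative value
  have haux : (ωn / m) ^ ((1:ℝ)/n) * ρ ^ ((1 - (n:ℝ))/n) * (ρ * Rm) = 1 := by
    rw [hRm]
    have h1 : (ωn / m) ^ ((1:ℝ)/n) * (m / (ρ * ωn)) ^ ((1:ℝ)/n)
        = ρ ^ (-(1:ℝ)/n) := by
      rw [← Real.mul_rpow (by positivity) (by positivity)]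
      have : ωn / m * (m / (ρ * ωn)) = ρ⁻¹ := by field_simp
      rw [this, ← Real.rpow_neg_one ρ, ← Real.rpow_mul hρ.le]
      rw [show (-1:ℝ) * ((1:ℝ)/n) = -(1:ℝ)/n by ring]
    calc (ωn / m) ^ ((1:ℝ)/n) * ρ ^ ((1 - (n:ℝ))/n) * (ρ * (m / (ρ * ωn)) ^ ((1:ℝ)/n))
        = ((ωn / m) ^ ((1:ℝ)/n) * (m / (ρ * ωn)) ^ ((1:ℝ)/n)) * (ρ ^ ((1 - (n:ℝ))/n) * ρ) := by
          ring
      _ = ρ ^ (-(1:ℝ)/n) * (ρ ^ ((1 - (n:ℝ))/n) * ρ ^ (1:ℝ)) := by rw [h1, Real.rpow_one]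
      _ = ρ ^ (-(1:ℝ)/n + ((1 - (n:ℝ))/n + 1)) := by
          rw [← Real.rpow_add hρ, ← Real.rpow_add hρ]
      _ = 1 := by
          rw [show -(1:ℝ)/n + ((1 - (n:ℝ))/n + 1) = 0 by field_simp; ring, Real.rpow_zero]
  have hρRm : 0 < ρ * Rm := by positivity
  have key : deriv ψ 0 * (ρ * Rm) < ((n:ℝ) - 1) * ψ 0 := by
    calc deriv ψ 0 * (ρ * Rm)
        < ((n:ℝ) - 1) * (ωn / m) ^ ((1:ℝ)/n) * ρ ^ ((1 - (n:ℝ))/n) * ψ 0 * (ρ * Rm) :=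
          mul_lt_mul_of_pos_right hA1 hρRm
      _ = ((n:ℝ) - 1) * ψ 0 * ((ωn / m) ^ ((1:ℝ)/n) * ρ ^ ((1 - (n:ℝ))/n) * (ρ * Rm)) := by ring
      _ = ((n:ℝ) - 1) * ψ 0 := by rw [haux, mul_one]
  have hEpos : 0 < (n:ℝ) * ωn * (((n:ℝ) - 1) * Rm ^ (n - 2)) *
        ψ ((m - ρ * ωn * Rm ^ n) / ((n:ℝ) * ωn * Rm ^ (n - 1))) +
        (n:ℝ) * ωn * Rm ^ (n - 1) * (deriv ψ 0 * -ρ) := by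
    rw [hubarRm]
    have hpow : Rm ^ (n - 1) = Rm ^ (n - 2) * Rm := by rw [hsub2, pow_succ]
    rw [hpow]
    have h1 : 0 < (n:ℝ) * ωn * Rm ^ (n - 2) := by positivity
    have : (n:ℝ) * ωn * (((n:ℝ) - 1) * Rm ^ (n - 2)) * ψ 0 +
        (n:ℝ) * ωn * (Rm ^ (n - 2) * Rm) * (deriv ψ 0 * -ρ)
        = ((n:ℝ) * ωn * Rm ^ (n - 2)) * (((n:ℝ) - 1) * ψ 0 - deriv ψ 0 * (ρ * Rm)) := by ring
    rw [this]
    exact mul_pos h1 (by linarith)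
  -- the tendsto part
  have hcont_pow : Continuous (fun R : ℝ => (n:ℝ) * ωn * R ^ (n - 1)) :=
    continuous_const.mul (continuous_pow (n-1))
  have hnum_cont : Continuous (fun R : ℝ => m - ρ * ωn * R ^ n) :=
    continuous_const.sub (continuous_const.mul (continuous_pow n))
  have hden_to : Tendsto (fun R : ℝ => (n:ℝ) * ωn * R ^ (n - 1))
      (nhdsWithin 0 (Set.Ioi 0)) (nhdsWithin 0 (Set.Ioi 0)) := by
    rw [tendsto_nhdsWithin_iff]
    constructor
    · have := (hcont_pow.tendsto 0).mono_left (nhdsWithin_le_nhds (s := Set.Ioi (0:ℝ)))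
      simpa [zero_pow (show n - 1 ≠ 0 by omega)] using this
    · filter_upwards [self_mem_nhdsWithin] with R hR
      have : (0:ℝ) < R := hR
      exact Set.mem_Ioi.mpr (by positivity)
  have hnum_to : Tendsto (fun R : ℝ => m - ρ * ωn * R ^ n)
      (nhdsWithin 0 (Set.Ioi 0)) (nhds m) := by
    have := (hnum_cont.tendsto 0).mono_left (nhdsWithin_le_nhds (s := Set.Ioi (0:ℝ)))
    simpa [zero_pow (show n ≠ 0 by omega)] using this
  have hubar_to : Tendsto (fun R : ℝ => (m - ρ * ωn * R ^ n) / ((n:ℝ) * ωn * R ^ (n - 1)))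
      (nhdsWithin 0 (Set.Ioi 0)) atTop := by
    have hinv : Tendsto (fun R : ℝ => ((n:ℝ) * ωn * R ^ (n - 1))⁻¹)
        (nhdsWithin 0 (Set.Ioi 0)) atTop := tendsto_inv_nhdsGT_zero.comp hden_to
    simpa [div_eq_mul_inv] using hnum_to.pos_mul_atTop hm hinv
  have hratio := hsuper.comp hubar_to
  have hIoo : Set.Ioo (0:ℝ) Rm ∈ nhdsWithin (0:ℝ) (Set.Ioi 0) :=
    Ioo_mem_nhdsGT_of_mem ⟨le_refl 0, hRmpos⟩
  have hubar_pos : ∀ R ∈ Set.Ioo (0:ℝ) Rm,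
      0 < (m - ρ * ωn * R ^ n) / ((n:ℝ) * ωn * R ^ (n - 1)) := by
    intro R hR
    have hR0 : 0 < R := hR.1
    have hnum_pos : 0 < m - ρ * ωn * R ^ n := by
      have : R ^ n < Rm ^ n := pow_lt_pow_left₀ hR.2 hR0.le (by omega)
      rw [hRmn] at this
      have := (lt_div_iff₀ (by positivity)).mp this
      linarith [mul_comm (R ^ n) (ρ * ωn)]
    positivity
  have heq : ∀ᶠ R in nhdsWithin (0:ℝ) (Set.Ioi 0),
      (fun R => (m - ρ * ωn * R ^ n) *
        (ψ ((m - ρ * ωn * R ^ n) / ((n:ℝ) * ωn * R ^ (n - 1))) /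
          ((m - ρ * ωn * R ^ n) / ((n:ℝ) * ωn * R ^ (n - 1))))) R
      = (n:ℝ) * ωn * R ^ (n - 1) * ψ ((m - ρ * ωn * R ^ n) / ((n:ℝ) * ωn * R ^ (n - 1))) := by
    filter_upwards [hIoo] with R hR
    have hR0 : 0 < R := hR.1
    have hu := hubar_pos R hR
    have hd : (0:ℝ) < (n:ℝ) * ωn * R ^ (n - 1) := by positivity
    have hnum_pos : 0 < m - ρ * ωn * R ^ n := by
      have := (div_pos_iff.mp hu)
      rcases this with ⟨h1, _⟩ | ⟨_, h2⟩
      · exact h1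
      · linarith
    field_simp
  have htend : Tendsto (fun R : ℝ =>
      (n:ℝ) * ωn * R ^ (n - 1) * ψ ((m - ρ * ωn * R ^ n) / ((n:ℝ) * ωn * R ^ (n - 1))))
      (nhdsWithin 0 (Set.Ioi 0)) atTop := by
    refine Tendsto.congr' ?_ (hnum_to.pos_mul_atTop hm hratio)
    exact heq
  refine ⟨?_, htend, ?_⟩
  · -- existence of a minimizer
    set f : ℝ → ℝ := fun R =>
      (n:ℝ) * ωn * R ^ (n - 1) * ψ ((m - ρ * ωn * R ^ n) / ((n:ℝ) * ωn * R ^ (n - 1))) with hf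
    set R₀ : ℝ := Rm / 2 with hR₀
    have hR₀mem : R₀ ∈ Set.Ioo (0:ℝ) Rm := ⟨by positivity, by linarith⟩
    -- threshold from tendsto
    have hev : ∀ᶠ R in nhdsWithin (0:ℝ) (Set.Ioi 0), f R₀ < f R :=
      htend.eventually (eventually_gt_atTop (f R₀))
    obtain ⟨u, hu_mem, hu_sub⟩ := mem_nhdsGT_iff_exists_Ioo_subset.mp hev
    set δ : ℝ := min u R₀ with hδ
    have hδpos : 0 < δ := lt_min hu_mem hR₀mem.1
    have hδR₀ : δ ≤ R₀ := min_le_right _ _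
    have hδRm : δ < Rm := lt_of_le_of_lt hδR₀ hR₀mem.2
    -- continuity of f on [δ, Rm]
    have hcontf : ContinuousOn f (Set.Icc δ Rm) := by
      apply ContinuousOn.mul hcont_pow.continuousOn
      apply hC1.continuous.comp_continuousOn
      apply ContinuousOn.div hnum_cont.continuousOn hcont_pow.continuousOn
      intro x hx
      have : 0 < x := lt_of_lt_of_le hδpos hx.1
      positivity
    obtain ⟨c, hc_mem, hc_min⟩ := (isCompact_Icc).exists_isMinOn
      (Set.nonempty_Icc.mpr (le_of_lt hδRm)) hcontf
    -- a point just below Rm where f < f Rm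
    have hslope := hasDerivAt_iff_tendsto_slope.mp hE
    have hslope' : Tendsto (slope f Rm) (nhdsWithin Rm (Set.Iio Rm)) (nhds _) :=
      hslope.mono_left (nhdsWithin_mono Rm (fun x hx => ne_of_lt hx))
    have hev2 : ∀ᶠ z in nhdsWithin Rm (Set.Iio Rm), 0 < slope f Rm z :=
      hslope'.eventually (eventually_gt_nhds hEpos)
    have hev3 : Set.Ioo δ Rm ∈ nhdsWithin Rm (Set.Iio Rm) :=
      Ioo_mem_nhdsLT_of_mem ⟨hδRm, le_refl Rm⟩
    obtain ⟨z, hz_slope, hz_mem⟩ := (hev2.and (eventually_of_mem hev3 (fun _ h => h))).exists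
    have hz_lt : f z < f Rm := by
      have hs : slope f Rm z = (f z - f Rm) / (z - Rm) := slope_def_field f Rm z
      rw [hs] at hz_slope
      have hzRm : z - Rm < 0 := by linarith [hz_mem.2]
      rcases div_pos_iff.mp hz_slope with ⟨h1, h2⟩ | ⟨h1, h2⟩
      · linarith
      · linarith
    have hcRm : c ≠ Rm := by
      intro hcontra
      have := hc_min ⟨hz_mem.1.le, hz_mem.2.le⟩
      rw [hcontra] at this
      simp only [Set.mem_setOf_eq] at this
      linarith
    have hc_lt : c < Rm := lt_of_le_of_ne hc_mem.2 hcRm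
    refine ⟨c, ⟨lt_of_lt_of_le hδpos hc_mem.1, hc_lt⟩, ?_⟩
    intro R' hR'
    by_cases hcase : δ ≤ R'
    · exact hc_min ⟨hcase, hR'.2.le⟩
    · push_neg at hcase
      have hR'u : R' ∈ Set.Ioo (0:ℝ) u := ⟨hR'.1, lt_of_lt_of_le hcase (min_le_left _ _)⟩
      have h1 : f R₀ < f R' := hu_sub hR'u
      have h2 : f c ≤ f R₀ := hc_min ⟨hδR₀, hR₀mem.2.le⟩
      linarith
  · rw [hE.deriv]
    exact hEpos
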